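/- Subtour elimination: a 0-1 edge selection x on the complete digraph over node set V̄ with exactly one outgoing and one incoming selected edge per node, and satisfying Σ_{i,j ∈ S} x_{ij} ≤ |S| − 1 for every proper subset S of V̄ with 2 ≤ |S| ≤ |V̄|−1, corresponds to a single Hamiltonian cycle on V̄. -/
import Mathlib


open scoped BigOperators

theorem exists_unique_of_sum_one {V : Type*} [Fintype V] [DecidableEq V]
    (f : V → ℕ) (h01 : ∀ j, f j = 0 ∨ f j = 1) (hs : ∑ j, f j = 1) :
    ∃! j, f j = 1 := by
  have hcard : (Finset.univ.filter fun j => f j = 1).card = 1 := by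
    have h1 : ∑ j, f j = ∑ j ∈ Finset.univ.filter fun j => f j = 1, f j := by
      rw [Finset.sum_filter]
      apply Finset.sum_congr rfl
      intro j _
      rcases h01 j with h | h <;> simp [h]
    have h2 : ∑ j ∈ Finset.univ.filter fun j => f j = 1, f j
        = (Finset.univ.filter fun j => f j = 1).card := by
      rw [Finset.card_eq_sum_ones]
      apply Finset.sum_congr rfl
      intro j hj
      simpa using (Finset.mem_filter.mp hj).2
    omega
  obtain ⟨a, ha⟩ := Finset.card_eq_one.mp hcard
  refine ⟨a, ?_, ?_⟩
  · have : a ∈ Finset.univ.filter fun j => f j = 1 := by rw [ha]; simp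
    simpa using (Finset.mem_filter.mp this).2
  · intro b hb
    have : b ∈ Finset.univ.filter fun j => f j = 1 := by simp [hb]
    rw [ha] at this
    simpa using this

/-- Subtour elimination: a 0-1 edge selection with unit out- and in-degree at
every node satisfying the subtour elimination constraints on every proper
subset corresponds to a single Hamiltonian (directed) cycle on all nodes. -/
theorem subtour_elimination_hamiltonian {V : Type*} [Fintype V] [DecidableEq V]
    (hV : 3 ≤ Fintype.card V) (x : V → V → ℕ)
    (h01 : ∀ i j, x i j = 0 ∨ x i j = 1)
    (hdiag : ∀ i, x i i = 0)
    (hout : ∀ i, ∑ j, x i j = 1)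
    (hin : ∀ j, ∑ i, x i j = 1)
    (hsub : ∀ S : Finset V, 2 ≤ S.card → S.card ≤ Fintype.card V - 1 →
      ∑ i ∈ S, ∑ j ∈ S, x i j ≤ S.card - 1) :
    ∃ σ : Equiv.Perm V, σ.IsCycle ∧ σ.support = Finset.univ ∧
      ∀ i j, x i j = 1 ↔ σ i = j := by
  classical
  have hex : ∀ i, ∃! j, x i j = 1 := fun i =>
    exists_unique_of_sum_one (x i) (h01 i) (hout i)
  have hex' : ∀ j, ∃! i, x i j = 1 := fun j =>
    exists_unique_of_sum_one (fun i => x i j) (fun i => h01 i j) (hin j)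
  set f : V → V := fun i => Fintype.choose _ (hex i) with hf
  set g : V → V := fun j => Fintype.choose _ (hex' j) with hg
  have hfspec : ∀ i, x i (f i) = 1 := fun i => Fintype.choose_spec _ (hex i)
  have hgspec : ∀ j, x (g j) j = 1 := fun j => Fintype.choose_spec _ (hex' j)
  have hlr : ∀ i, g (f i) = i := fun i => ((hex' (f i)).unique (hgspec (f i)) (hfspec i))
  have hrl : ∀ j, f (g j) = j := fun j => ((hex (g j)).unique (hfspec (g j)) (hgspec j))
  set σ : Equiv.Perm V := ⟨f, g, hlr, hrl⟩ with hσ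
  have hkey : ∀ i j, x i j = 1 ↔ σ i = j := by
    intro i j
    constructor
    · intro h
      exact ((hex i).unique (hfspec i) h : f i = j)
    · intro h
      rw [show σ i = f i from rfl] at h
      rw [← h]; exact hfspec i
  have hfix : ∀ i, σ i ≠ i := by
    intro i h
    have := (hkey i i).mpr h
    rw [hdiag i] at this; omega
  -- closed-set sum lemma
  have hsum : ∀ S : Finset V, (∀ i ∈ S, σ i ∈ S) →
      ∑ i ∈ S, ∑ j ∈ S, x i j = S.card := by
    intro S hS
    rw [Finset.card_eq_sum_ones]
    apply Finset.sum_congr rfl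
    intro i hi
    have hxi : ∀ j, x i j = if σ i = j then 1 else 0 := by
      intro j
      by_cases h : σ i = j
      · simp [h, (hkey i j).mpr h]
      · rcases h01 i j with h0 | h1
        · simp [h, h0]
        · exact absurd ((hkey i j).mp h1) h
      
    calc ∑ j ∈ S, x i j = ∑ j ∈ S, if σ i = j then 1 else 0 :=
          Finset.sum_congr rfl fun j _ => hxi j
      _ = 1 := by rw [Finset.sum_ite_eq] ; simp [hS i hi]
  have hne : Nonempty V := by
    have h0 : 0 < Fintype.card V := by omega
    exact Fintype.card_pos_iff.mp h0
  obtain ⟨a⟩ := hne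
  set S : Finset V := Finset.univ.filter fun b => σ.SameCycle a b with hS
  have haS : a ∈ S := by simp [hS, Equiv.Perm.SameCycle.refl]
  have hclosed : ∀ b ∈ S, σ b ∈ S := by
    intro b hb
    simp only [hS, Finset.mem_filter, Finset.mem_univ, true_and] at hb ⊢
    exact hb.trans ⟨1, by simp⟩
  have hσaS : σ a ∈ S := hclosed a haS
  have hcard2 : 2 ≤ S.card := by
    apply Finset.one_lt_card.mpr
    exact ⟨a, haS, σ a, hσaS, (hfix a).symm⟩
  have hSuniv : S = Finset.univ := by
    by_contra h
    have hlt : S.card ≤ Fintype.card V - 1 := by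
      have := Finset.card_lt_card (Finset.ssubset_univ_iff.mpr h)
      simp only [Finset.card_univ] at this
      omega
    have := hsub S hcard2 hlt
    rw [hsum S hclosed] at this
    omega
  have hcycle : σ.IsCycle := by
    refine ⟨a, hfix a, ?_⟩
    intro b _
    have : b ∈ S := hSuniv ▸ Finset.mem_univ b
    simpa [hS] using this
  refine ⟨σ, hcycle, ?_, hkey⟩
  apply Finset.eq_univ_of_forall
  intro i
  exact Equiv.Perm.mem_support.mpr (hfix i)
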